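/- Let R₀, R₁, …, R_T be a sequence of m×n matrices over 𝔽₂ such that for every t < T, R_{t+1} is obtained from R_t by a collision-resolving addition. Then T ≤ m·n. (Any reduction by collision-resolving column additions terminates after at most m·n operations, since each operation either zeroes a column or strictly decreases its low.) -/

import Mathlib

open Matrix

/-- The `low` of column `j` of `R`: the largest row index `i` with `R i j ≠ 0`,
or `⊥` if the column is zero. -/
def low {m n : ℕ} (R : Matrix (Fin m) (Fin n) (ZMod 2)) (j : Fin n) : WithBot (Fin m) :=
  (Finset.univ.filter fun i => R i j ≠ 0).max

/-- `R` is reduced if no two distinct nonzero columns have equal lows. -/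
def Reduced {m n : ℕ} (R : Matrix (Fin m) (Fin n) (ZMod 2)) : Prop :=
  ∀ j₁ j₂ : Fin n, low R j₁ ≠ ⊥ → low R j₁ = low R j₂ → j₁ = j₂

/-- A square matrix is upper triangular if `V i j = 0` whenever `i > j`. -/
def UpperTri {k : ℕ} (V : Matrix (Fin k) (Fin k) (ZMod 2)) : Prop :=
  ∀ i j : Fin k, j < i → V i j = 0

/-- A collision-resolving addition: column `i` of `R` is replaced by
(column `i`) + (column `j`) for some `j < i` with both columns nonzero and
`low R j = low R i`. -/
def CollStep {m n : ℕ} (R R' : Matrix (Fin m) (Fin n) (ZMod 2)) : Prop :=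
  ∃ i j : Fin n, j < i ∧ low R j ≠ ⊥ ∧ low R i ≠ ⊥ ∧ low R j = low R i ∧
    R' = R.updateCol i (fun k => R k i + R k j)

/-- Numerical value of a `low`: `⊥ ↦ 0`, `i ↦ i + 1`. -/
def phi {m : ℕ} (x : WithBot (Fin m)) : ℕ :=
  WithBot.recBotCoe 0 (fun i => i.val + 1) x

lemma phi_lt_phi {m : ℕ} {x y : WithBot (Fin m)} (h : x < y) : phi x < phi y := by
  induction y using WithBot.recBotCoe with
  | bot => exact absurd h (not_lt_bot)
  | coe b =>
    induction x using WithBot.recBotCoe with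
    | bot => simp [phi]
    | coe a =>
      have : a < b := WithBot.coe_lt_coe.mp h
      simpa [phi] using this

lemma phi_le {m : ℕ} (x : WithBot (Fin m)) : phi x ≤ m := by
  induction x using WithBot.recBotCoe with
  | bot => exact Nat.zero_le m
  | coe a => exact a.isLt

/-- Potential of a matrix. -/
def Phi {m n : ℕ} (R : Matrix (Fin m) (Fin n) (ZMod 2)) : ℕ :=
  ∑ j : Fin n, phi (low R j)

lemma Phi_le {m n : ℕ} (R : Matrix (Fin m) (Fin n) (ZMod 2)) : Phi R ≤ m * n := by
  calc Phi R ≤ ∑ _j : Fin n, m := Finset.sum_le_sum fun j _ => phi_le _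
  _ = m * n := by simp [Finset.sum_const, Nat.mul_comm]

lemma collstep_phi_lt {m n : ℕ} {R R' : Matrix (Fin m) (Fin n) (ZMod 2)}
    (h : CollStep R R') : Phi R' < Phi R := by
  obtain ⟨i, j, hji, hj, hi, hlow, hR'⟩ := h
  obtain ⟨l, hl⟩ := WithBot.ne_bot_iff_exists.mp hi
  have hlmemi : l ∈ Finset.univ.filter fun k => R k i ≠ 0 := Finset.mem_of_max hl.symm
  have hlmemj : l ∈ Finset.univ.filter fun k => R k j ≠ 0 :=
    Finset.mem_of_max (hlow.trans hl.symm)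
  have hRli : R l i ≠ 0 := (Finset.mem_filter.mp hlmemi).2
  have hRlj : R l j ≠ 0 := (Finset.mem_filter.mp hlmemj).2
  have key : low R' i < low R i := by
    rw [← hl]
    have hall : ∀ k ∈ Finset.univ.filter fun k => R' k i ≠ 0, k < l := by
      intro k hk
      have hk' : R k i + R k j ≠ 0 := by
        have := (Finset.mem_filter.mp hk).2
        rwa [hR', Matrix.updateCol_self] at this
      have hle : k ≤ l := by
        by_cases hki : R k i ≠ 0
        · have : (k : WithBot (Fin m)) ≤ low R i :=
            Finset.le_max (Finset.mem_filter.mpr ⟨Finset.mem_univ _, hki⟩)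
          rw [← hl] at this; exact_mod_cast this
        · have hkj : R k j ≠ 0 := by
            intro h0; push_neg at hki; rw [hki, h0] at hk'; simp at hk'
          have : (k : WithBot (Fin m)) ≤ low R j :=
            Finset.le_max (Finset.mem_filter.mpr ⟨Finset.mem_univ _, hkj⟩)
          rw [hlow, ← hl] at this; exact_mod_cast this
      rcases lt_or_eq_of_le hle with hlt | heq
      · exact hlt
      · exfalso
        subst heq
        have h1 : R k i = 1 := by
          have : ∀ a : ZMod 2, a ≠ 0 → a = 1 := by decide
          exact this _ hRli
        have h2 : R k j = 1 := by
          have : ∀ a : ZMod 2, a ≠ 0 → a = 1 := by decide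
          exact this _ hRlj
        rw [h1, h2] at hk'
        exact hk' (by decide)
    rcases hmax : low R' i with _ | k
    · exact WithBot.bot_lt_coe l
    · have hkmem : k ∈ Finset.univ.filter fun k => R' k i ≠ 0 := Finset.mem_of_max hmax
      exact WithBot.coe_lt_coe.mpr (hall k hkmem)
  have hother : ∀ j' : Fin n, j' ≠ i → low R' j' = low R j' := by
    intro j' hj'
    unfold low
    congr 1
    ext k
    simp [hR', Matrix.updateCol_ne hj']
  apply Finset.sum_lt_sum
  · intro j' _
    by_cases hji' : j' = i
    · subst hji'; exact le_of_lt (phi_lt_phi key)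
    · rw [hother j' hji']
  · exact ⟨i, Finset.mem_univ i, phi_lt_phi key⟩

/-- any sequence of collision-resolving additions has length at most `m * n`. -/
theorem stmt_7 {m n T : ℕ} (R : ℕ → Matrix (Fin m) (Fin n) (ZMod 2))
    (h : ∀ t < T, CollStep (R t) (R (t + 1))) : T ≤ m * n := by
  have main : ∀ t ≤ T, Phi (R t) + t ≤ Phi (R 0) := by
    intro t ht
    induction t with
    | zero => simp
    | succ k ih =>
      have hk : k < T := Nat.lt_of_succ_le ht
      have h1 := collstep_phi_lt (h k hk)
      have h2 := ih (le_of_lt hk)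
      omega
  have := main T le_rfl
  have := Phi_le (R 0)
  omega
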